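/- arXiv:1309.1534 — 3 statements merged into one kernel-verified Lean document; each statement's English description precedes it below -/
import Mathlib

section
/- Let U : [0,T] → U(N) be differentiable with U(0) = I, and v₀ ∈ S_{N,K}(ℂ). If h : [0,T] → M(K,K;ℂ) solves h'(t) = -(v₀† U(t)† U'(t) v₀) h(t) with h(0) = I_K, then h(t) is unitary for all t, and V(t) := U(t) v₀ h(t) satisfies the horizontality condition V(t)† V'(t) = 0 and projects onto P(t) = U(t) v₀ v₀† U(t)†. -/
open Matrix

attribute [local instance] Matrix.normedAddCommGroup Matrix.normedSpace

private theorem mat_entry' {a b : ℕ} {f : ℝ → Matrix (Fin a) (Fin b) ℂ}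
    {f' : Matrix (Fin a) (Fin b) ℂ} {t : ℝ}
    (hf : HasDerivAt f f' t) (i : Fin a) (j : Fin b) :
    HasDerivAt (fun s => f s i j) (f' i j) t :=
  hasDerivAt_pi.mp (hasDerivAt_pi.mp hf i) j

private theorem mat_mul' {a b c : ℕ} {f : ℝ → Matrix (Fin a) (Fin b) ℂ}
    {g : ℝ → Matrix (Fin b) (Fin c) ℂ}
    {f' g'} {t : ℝ} (hf : HasDerivAt f f' t) (hg : HasDerivAt g g' t) :
    HasDerivAt (fun s => f s * g s) (f' * g t + f t * g') t := by
  apply hasDerivAt_pi.mpr; intro i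
  apply hasDerivAt_pi.mpr; intro j
  have he : ∀ s, (f s * g s) i j = ∑ k, f s i k * g s k j := fun s => rfl
  simp only [he]
  have : HasDerivAt (fun s => ∑ k, f s i k * g s k j)
      (∑ k, (f' i k * g t k j + f t i k * g' k j)) t :=
    HasDerivAt.fun_sum fun k _ => (mat_entry' hf i k).mul (mat_entry' hg k j)
  convert this using 1
  show (f' * g t + f t * g') i j = _
  simp [Matrix.add_apply, Matrix.mul_apply, Finset.sum_add_distrib]
  rfl

private theorem mat_ct' {a b : ℕ} {f : ℝ → Matrix (Fin a) (Fin b) ℂ} {f'} {t : ℝ}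
    (hf : HasDerivAt f f' t) :
    HasDerivAt (fun s => (f s)ᴴ) f'ᴴ t := by
  apply hasDerivAt_pi.mpr; intro i
  apply hasDerivAt_pi.mpr; intro j
  simpa [Matrix.conjTranspose_apply] using (mat_entry' hf j i).star

/-- The solution of the ODE `h' = -(v₀† U† U' v₀) h`, `h(0) = 1`, is unitary, and
`V(t) = U(t) v₀ h(t)` is a horizontal lift of `P(t) = U(t) v₀ v₀† U(t)†`. -/
theorem horizontal_lift_construction {N K : ℕ} (T : ℝ)
    (U U' : ℝ → Matrix (Fin N) (Fin N) ℂ)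
    (hUdiff : ∀ t, HasDerivAt U (U' t) t)
    (hU : ∀ t, U t ∈ Matrix.unitaryGroup (Fin N) ℂ)
    (hU0 : U 0 = 1)
    (v₀ : Matrix (Fin N) (Fin K) ℂ) (hv₀ : v₀ᴴ * v₀ = 1)
    (h h' : ℝ → Matrix (Fin K) (Fin K) ℂ)
    (hhdiff : ∀ t, HasDerivAt h (h' t) t)
    (hODE : ∀ t, h' t = -((v₀ᴴ * (U t)ᴴ * U' t * v₀) * h t))
    (hh0 : h 0 = 1)
    (t : ℝ) (ht : t ∈ Set.Icc 0 T) :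
    (h t)ᴴ * h t = 1 ∧ h t * (h t)ᴴ = 1 ∧
    (∀ W' : Matrix (Fin N) (Fin K) ℂ,
      HasDerivAt (fun s => U s * v₀ * h s) W' t →
        (U t * v₀ * h t)ᴴ * W' = 0) ∧
    (U t * v₀ * h t) * (U t * v₀ * h t)ᴴ = U t * (v₀ * v₀ᴴ) * (U t)ᴴ := by
  -- Uᴴ U = 1
  have hUu : ∀ s, (U s)ᴴ * U s = 1 := fun s => by
    have := Matrix.mem_unitaryGroup_iff'.mp (hU s)
    rwa [Matrix.star_eq_conjTranspose] at this
  -- skewness of the connection term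
  have hskew : ∀ s, (U' s)ᴴ * U s + (U s)ᴴ * U' s = 0 := by
    intro s
    have h1 : HasDerivAt (fun r => (U r)ᴴ * U r) ((U' s)ᴴ * U s + (U s)ᴴ * U' s) s :=
      mat_mul' (mat_ct' (hUdiff s)) (hUdiff s)
    have h2 : HasDerivAt (fun r => (U r)ᴴ * U r) 0 s := by
      have : (fun r => (U r)ᴴ * U r) = fun _ => (1 : Matrix (Fin N) (Fin N) ℂ) :=
        funext fun r => hUu r
      rw [this]; exact hasDerivAt_const s 1
    exact h1.unique h2
  set A : ℝ → Matrix (Fin K) (Fin K) ℂ := fun s => v₀ᴴ * (U s)ᴴ * U' s * v₀ with hA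
  replace hODE : ∀ s, h' s = -(A s * h s) := hODE
  have hAskew : ∀ s, (A s)ᴴ = -A s := by
    intro s
    have e1 : (U' s)ᴴ * U s = -((U s)ᴴ * U' s) := by
      have := hskew s; linear_combination (norm := noncomm_ring) this
    simp only [hA, Matrix.conjTranspose_mul, Matrix.conjTranspose_conjTranspose]
    rw [Matrix.mul_assoc, Matrix.mul_assoc]
    rw [show (U' s)ᴴ * (U s * v₀) = ((U' s)ᴴ * U s) * v₀ from (Matrix.mul_assoc _ _ _).symm, e1]
    simp [Matrix.neg_mul, Matrix.mul_neg, Matrix.mul_assoc]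
  -- h'ᴴ
  have hODE' : ∀ s, (h' s)ᴴ = (h s)ᴴ * A s := by
    intro s
    rw [hODE s]
    simp only [Matrix.conjTranspose_neg, Matrix.conjTranspose_mul, hAskew, Matrix.mul_neg,
      neg_neg]
  -- hᴴ h constant
  have hunit : ∀ s, (h s)ᴴ * h s = 1 := by
    have hg : ∀ s, HasDerivAt (fun r => (h r)ᴴ * h r) 0 s := by
      intro s
      have := mat_mul' (mat_ct' (hhdiff s)) (hhdiff s)
      convert this using 1
      rw [hODE' s, hODE s]
      simp only [Matrix.mul_neg]
      rw [Matrix.mul_assoc, ← Matrix.mul_assoc (h s)ᴴ (A s) (h s)]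
      abel
    have hconst : ∀ x y : ℝ, (h x)ᴴ * h x = (h y)ᴴ * h y :=
      is_const_of_deriv_eq_zero (fun s => (hg s).differentiableAt)
        (fun s => (hg s).deriv)
    intro s
    rw [hconst s 0, hh0]; simp
  have hunit' : h t * (h t)ᴴ = 1 := mul_eq_one_comm.mp (hunit t)
  refine ⟨hunit t, hunit', ?_, ?_⟩
  · intro W' hW'
    have hD : HasDerivAt (fun s => U s * v₀ * h s)
        ((U' t * v₀ + U t * (0 : Matrix (Fin N) (Fin K) ℂ)) * h t + (U t * v₀) * h' t) t :=
      mat_mul' (mat_mul' (hUdiff t) (hasDerivAt_const t v₀)) (hhdiff t)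
    have hWD : W' = (U' t * v₀ + U t * (0 : Matrix (Fin N) (Fin K) ℂ)) * h t + (U t * v₀) * h' t := hW'.unique hD
    rw [hWD, hODE t]
    have hc : ∀ X : Matrix (Fin N) (Fin K) ℂ, (U t)ᴴ * (U t * X) = X := fun X => by
      rw [← Matrix.mul_assoc, hUu t, Matrix.one_mul]
    have vc : ∀ X : Matrix (Fin K) (Fin K) ℂ, v₀ᴴ * (v₀ * X) = X := fun X => by
      rw [← Matrix.mul_assoc, hv₀, Matrix.one_mul]
    simp only [Matrix.mul_zero, add_zero, Matrix.mul_add, Matrix.conjTranspose_mul,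
      Matrix.mul_assoc, Matrix.mul_neg, hA, hc, vc]
    simp [← Matrix.mul_assoc]
  · calc (U t * v₀ * h t) * (U t * v₀ * h t)ᴴ
        = U t * v₀ * (h t * (h t)ᴴ) * (v₀ᴴ * (U t)ᴴ) := by
          simp only [Matrix.conjTranspose_mul, Matrix.mul_assoc]
      _ = U t * (v₀ * v₀ᴴ) * (U t)ᴴ := by rw [hunit']; simp [Matrix.mul_assoc]
end

section
/- Uniqueness of horizontal lifts: if V₁ and V₂ are two differentiable curves in S_{N,K}(ℂ) with V₁(0) = V₂(0), V₁(t)V₁(t)† = V₂(t)V₂(t)† for all t, and Vᵢ(t)† Vᵢ'(t) = 0 for all t and i = 1,2, then V₁(t) = V₂(t) for all t. -/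
open Matrix

attribute [local instance] Matrix.normedAddCommGroup Matrix.normedSpace

variable {N K : ℕ}


noncomputable def ctCLM (N K : ℕ) : Matrix (Fin N) (Fin K) ℂ →L[ℝ] Matrix (Fin K) (Fin N) ℂ :=
  LinearMap.toContinuousLinearMap
    { toFun := conjTranspose
      map_add' := fun A B => conjTranspose_add A B
      map_smul' := fun r A => by simp [conjTranspose_smul] }

noncomputable def mulLM (N K : ℕ) :
    Matrix (Fin K) (Fin N) ℂ →ₗ[ℝ] Matrix (Fin N) (Fin K) ℂ →ₗ[ℝ] Matrix (Fin K) (Fin K) ℂ :=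
  LinearMap.mk₂ ℝ (fun A B => A * B)
    (fun A B C => Matrix.add_mul A B C)
    (fun r A B => Matrix.smul_mul r A B)
    (fun A B C => Matrix.mul_add A B C)
    (fun r A B => Matrix.mul_smul A r B)

noncomputable def mulCLM (N K : ℕ) :
    Matrix (Fin K) (Fin N) ℂ →L[ℝ] Matrix (Fin N) (Fin K) ℂ →L[ℝ] Matrix (Fin K) (Fin K) ℂ :=
  LinearMap.toContinuousLinearMap
    (((LinearMap.toContinuousLinearMap :
        (Matrix (Fin N) (Fin K) ℂ →ₗ[ℝ] Matrix (Fin K) (Fin K) ℂ) ≃ₗ[ℝ]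
        (Matrix (Fin N) (Fin K) ℂ →L[ℝ] Matrix (Fin K) (Fin K) ℂ)).toLinearMap) ∘ₗ mulLM N K)

@[simp] lemma ctCLM_apply (A : Matrix (Fin N) (Fin K) ℂ) : ctCLM N K A = Aᴴ := by
  simp [ctCLM]
@[simp] lemma mulCLM_apply (A : Matrix (Fin K) (Fin N) ℂ) (B : Matrix (Fin N) (Fin K) ℂ) :
    mulCLM N K A B = A * B := by
  simp [mulCLM, mulLM]

/-- Uniqueness of horizontal lifts with the same initial frame and the same projection. -/
theorem horizontal_lift_unique {N K : ℕ} (T : ℝ) (hT : 0 ≤ T)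
    (V₁ V₁' V₂ V₂' : ℝ → Matrix (Fin N) (Fin K) ℂ)
    (hV₁diff : ∀ t, HasDerivAt V₁ (V₁' t) t)
    (hV₂diff : ∀ t, HasDerivAt V₂ (V₂' t) t)
    (hV₁ : ∀ t, (V₁ t)ᴴ * V₁ t = 1)
    (hV₂ : ∀ t, (V₂ t)ᴴ * V₂ t = 1)
    (hproj : ∀ t, V₁ t * (V₁ t)ᴴ = V₂ t * (V₂ t)ᴴ)
    (hhor₁ : ∀ t, (V₁ t)ᴴ * V₁' t = 0)
    (hhor₂ : ∀ t, (V₂ t)ᴴ * V₂' t = 0)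
    (h0 : V₁ 0 = V₂ 0) :
    ∀ t ∈ Set.Icc 0 T, V₁ t = V₂ t := by
  -- U t = V₂(t)ᴴ V₁(t)
  set U : ℝ → Matrix (Fin K) (Fin K) ℂ := fun t => (V₂ t)ᴴ * V₁ t with hU
  -- V₂ * U = V₁
  have hVU : ∀ t, V₂ t * U t = V₁ t := by
    intro t
    calc V₂ t * ((V₂ t)ᴴ * V₁ t) = (V₂ t * (V₂ t)ᴴ) * V₁ t := by rw [Matrix.mul_assoc]
    _ = (V₁ t * (V₁ t)ᴴ) * V₁ t := by rw [hproj]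
    _ = V₁ t * ((V₁ t)ᴴ * V₁ t) := by rw [Matrix.mul_assoc]
    _ = V₁ t := by rw [hV₁, Matrix.mul_one]
  -- V₂ᴴ = U * V₁ᴴ
  have hct : ∀ t, U t * (V₁ t)ᴴ = (V₂ t)ᴴ := by
    intro t
    calc (V₂ t)ᴴ * V₁ t * (V₁ t)ᴴ = (V₂ t)ᴴ * (V₁ t * (V₁ t)ᴴ) := by rw [Matrix.mul_assoc]
    _ = (V₂ t)ᴴ * (V₂ t * (V₂ t)ᴴ) := by rw [hproj]
    _ = ((V₂ t)ᴴ * V₂ t) * (V₂ t)ᴴ := by rw [Matrix.mul_assoc]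
    _ = (V₂ t)ᴴ := by rw [hV₂, Matrix.one_mul]
  -- U has derivative 0 everywhere
  have hUderiv : ∀ t, HasDerivAt U 0 t := by
    intro t
    have h2ct : HasDerivAt (fun s => (V₂ s)ᴴ) ((V₂' t)ᴴ) t := by
      have := ((ctCLM N K).hasFDerivAt.comp_hasDerivAt t (hV₂diff t))
      exact this
    letI : NormedAddCommGroup (Matrix (Fin N) (Fin K) ℂ →L[ℝ] Matrix (Fin K) (Fin K) ℂ) :=
      ContinuousLinearMap.toNormedAddCommGroup
    letI : NormedSpace ℝ (Matrix (Fin N) (Fin K) ℂ →L[ℝ] Matrix (Fin K) (Fin K) ℂ) :=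
      ContinuousLinearMap.toNormedSpace
    have hc : HasDerivAt (fun s => mulCLM N K ((V₂ s)ᴴ)) (mulCLM N K ((V₂' t)ᴴ)) t :=
      (mulCLM N K).hasFDerivAt.comp_hasDerivAt t h2ct
    have hprod : HasDerivAt U
        (mulCLM N K ((V₂' t)ᴴ) (V₁ t) + mulCLM N K ((V₂ t)ᴴ) (V₁' t)) t := by
      have := hc.clm_apply (hV₁diff t)
      exact this
    have e1 : (V₂' t)ᴴ * V₁ t = 0 := by
      calc (V₂' t)ᴴ * V₁ t = (V₂' t)ᴴ * (V₂ t * U t) := by rw [hVU]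
      _ = ((V₂ t)ᴴ * V₂' t)ᴴ * U t := by
          rw [conjTranspose_mul, conjTranspose_conjTranspose, Matrix.mul_assoc]
      _ = 0 := by rw [hhor₂]; simp
    have e2 : (V₂ t)ᴴ * V₁' t = 0 := by
      calc (V₂ t)ᴴ * V₁' t = U t * (V₁ t)ᴴ * V₁' t := by rw [hct]
      _ = U t * ((V₁ t)ᴴ * V₁' t) := by rw [Matrix.mul_assoc]
      _ = 0 := by rw [hhor₁, Matrix.mul_zero]
    simpa [e1, e2] using hprod
  -- hence U is constant
  have hUconst : ∀ t, U t = U 0 := by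
    intro t
    have hdiff : Differentiable ℝ U := fun s => (hUderiv s).differentiableAt
    have hzero : ∀ s, deriv U s = 0 := fun s => (hUderiv s).deriv
    exact is_const_of_deriv_eq_zero hdiff hzero t 0
  have hU0 : U 0 = 1 := by
    rw [hU]; simp only []
    rw [h0, hV₂]
  intro t _
  have := hVU t
  rw [hUconst t, hU0, Matrix.mul_one] at this
  exact this.symm
end

section
/- Suppose ψ : [0,T] → ℂ^N satisfies ψ(t) = V(t)φ(t) with V(t) ∈ S_{N,K}(ℂ) horizontal (V†V' = 0) and H(t)V(t) = 0 for all t, where iψ' = Hψ. Then φ'(t) = 0, so φ is constant and ψ(t) = V(t)V(0)†ψ(0). -/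
open Matrix

attribute [local instance] Matrix.normedAddCommGroup Matrix.normedSpace

lemma hasDerivAt_entry {n k : ℕ} {A : ℝ → Matrix (Fin n) (Fin k) ℂ}
    {A' : Matrix (Fin n) (Fin k) ℂ} {t : ℝ} (hA : HasDerivAt A A' t)
    (i : Fin n) (j : Fin k) :
    HasDerivAt (fun s => A s i j) (A' i j) t := by
  have h1 : HasDerivAt (fun s => A s i) (A' i) t := hasDerivAt_pi.mp hA i
  exact hasDerivAt_pi.mp h1 j

lemma hasDerivAt_mulVec {n k : ℕ} {A : ℝ → Matrix (Fin n) (Fin k) ℂ}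
    {A' : Matrix (Fin n) (Fin k) ℂ} {x : ℝ → Fin k → ℂ} {x' : Fin k → ℂ} {t : ℝ}
    (hA : HasDerivAt A A' t) (hx : HasDerivAt x x' t) :
    HasDerivAt (fun s => A s *ᵥ x s) (A' *ᵥ x t + A t *ᵥ x') t := by
  rw [hasDerivAt_pi]
  intro i
  have : HasDerivAt (fun s => ∑ j, A s i j * x s j)
      (∑ j, (A' i j * x t j + A t i j * x' j)) t := by
    apply HasDerivAt.fun_sum
    intro j _
    exact (hasDerivAt_entry hA i j).mul (hasDerivAt_pi.mp hx j)
  convert this using 1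
  · rfl
  · rfl
  simp [Matrix.mulVec, dotProduct, Finset.sum_add_distrib]

/-- For adiabatic evolution within the zero-energy eigenspace along a horizontal frame
`V(t)`, the reduced state `φ(t) = V(t)†ψ(t)` is constant, so
`ψ(t) = V(t)V(0)†ψ(0)`. -/
theorem horizontal_zero_energy_evolution {N K : ℕ} (T : ℝ)
    (H : ℝ → Matrix (Fin N) (Fin N) ℂ)
    (ψ ψ' : ℝ → Fin N → ℂ)
    (V V' : ℝ → Matrix (Fin N) (Fin K) ℂ)
    (φ φ' : ℝ → Fin K → ℂ)
    (hψdiff : ∀ t, HasDerivAt ψ (ψ' t) t)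
    (hVdiff : ∀ t, HasDerivAt V (V' t) t)
    (hφdiff : ∀ t, HasDerivAt φ (φ' t) t)
    (hSchr : ∀ t, Complex.I • ψ' t = (H t).mulVec (ψ t))
    (hV : ∀ t, (V t)ᴴ * V t = 1)
    (hhor : ∀ t, (V t)ᴴ * V' t = 0)
    (hHV : ∀ t, H t * V t = 0)
    (hφ : ∀ t, φ t = (V t)ᴴ.mulVec (ψ t))
    (hψV : ∀ t, ψ t = (V t).mulVec (φ t)) :
    (∀ t, φ' t = 0) ∧ (∀ t, φ t = φ 0) ∧
      (∀ t, ψ t = (V t).mulVec ((V 0)ᴴ.mulVec (ψ 0))) := by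
  -- ψ' = 0
  have hψ'0 : ∀ t, ψ' t = 0 := by
    intro t
    have h1 : Complex.I • ψ' t = 0 := by
      rw [hSchr t, hψV t, Matrix.mulVec_mulVec, hHV t, Matrix.zero_mulVec]
    have := smul_eq_zero.mp h1
    rcases this with h | h
    · exact absurd h Complex.I_ne_zero
    · exact h
  -- product rule
  have hφ'0 : ∀ t, φ' t = 0 := by
    intro t
    have hprod : HasDerivAt (fun s => V s *ᵥ φ s) (V' t *ᵥ φ t + V t *ᵥ φ' t) t :=
      hasDerivAt_mulVec (hVdiff t) (hφdiff t)
    have heq : (fun s => V s *ᵥ φ s) = ψ := by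
      funext s; exact (hψV s).symm
    rw [heq] at hprod
    have huniq : ψ' t = V' t *ᵥ φ t + V t *ᵥ φ' t := (hψdiff t).unique hprod
    have h0 : V' t *ᵥ φ t + V t *ᵥ φ' t = 0 := by rw [← huniq, hψ'0]
    have h2 : (V t)ᴴ *ᵥ (V' t *ᵥ φ t + V t *ᵥ φ' t) = 0 := by rw [h0, Matrix.mulVec_zero]
    rwa [Matrix.mulVec_add, Matrix.mulVec_mulVec, Matrix.mulVec_mulVec, hhor t, hV t,
      Matrix.zero_mulVec, Matrix.one_mulVec, zero_add] at h2
  have hφconst : ∀ t, φ t = φ 0 := by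
    intro t
    have : ∀ s : ℝ, HasDerivAt φ 0 s := fun s => (hφ'0 s) ▸ hφdiff s
    have := is_const_of_deriv_eq_zero (fun s => (this s).differentiableAt)
      (fun s => (this s).deriv) t 0
    exact this
  refine ⟨hφ'0, hφconst, fun t => ?_⟩
  rw [hψV t, hφconst t, hφ 0]
end
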